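/- The map (q, r, n) ↦ q·r·n defines an isomorphism of groups ℚ^× × ℝ_{>0} × ∏_{ℓ prime} ℤ_ℓ^× ≅ 𝔸^× (the ideles of ℚ), where each factor is embedded in the ideles in the canonical way. -/

import Mathlib

noncomputable section

namespace DedekindDomain

open IsDedekindDomain

/-- The finite integral adeles `∏_v R_v` (removed from Mathlib; restored with its old meaning). -/
def FiniteIntegralAdeles (R : Type*) (K : Type*) [CommRing R] [IsDedekindDomain R] [Field K]
    [Algebra R K] [IsFractionRing R K] : Type _ :=
  ∀ v : HeightOneSpectrum R, v.adicCompletionIntegers K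

instance (R : Type*) (K : Type*) [CommRing R] [IsDedekindDomain R] [Field K]
    [Algebra R K] [IsFractionRing R K] : CommRing (FiniteIntegralAdeles R K) :=
  Pi.commRing

/-- The inclusion of the finite integral adeles into the finite adele ring. -/
def FiniteIntegralAdeles.toFiniteAdeleRing (R : Type*) (K : Type*) [CommRing R]
    [IsDedekindDomain R] [Field K] [Algebra R K] [IsFractionRing R K] :
    FiniteIntegralAdeles R K →+* FiniteAdeleRing R K where
  toFun x := ⟨fun v => ((x v : v.adicCompletionIntegers K) : v.adicCompletion K),
    Filter.Eventually.of_forall fun v => (x v).2⟩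
  map_one' := rfl
  map_mul' _ _ := rfl
  map_zero' := rfl
  map_add' _ _ := rfl

instance (R : Type*) (K : Type*) [CommRing R] [IsDedekindDomain R] [Field K]
    [Algebra R K] [IsFractionRing R K] :
    Algebra (FiniteIntegralAdeles R K) (FiniteAdeleRing R K) :=
  (FiniteIntegralAdeles.toFiniteAdeleRing R K).toAlgebra

end DedekindDomain

end


open DedekindDomain IsDedekindDomain IsDedekindDomain.HeightOneSpectrum

/-! ### Auxiliary lemmas on generators of height-one primes of `ℤ` -/

noncomputable def IdeleAux.gen (v : HeightOneSpectrum ℤ) : ℤ :=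
  Submodule.IsPrincipal.generator v.asIdeal

namespace IdeleAux

theorem span_gen (v : HeightOneSpectrum ℤ) : Ideal.span {gen v} = v.asIdeal :=
  Ideal.span_singleton_generator v.asIdeal

theorem gen_ne_zero (v : HeightOneSpectrum ℤ) : gen v ≠ 0 := by
  intro h
  apply v.ne_bot
  rw [← span_gen v]
  exact Ideal.span_singleton_eq_bot.mpr h

theorem val_gen_self (v : HeightOneSpectrum ℤ) :
    v.valuation ℚ ((gen v : ℤ) : ℚ) = (Multiplicative.ofAdd (-1 : ℤ) : Multiplicative ℤ) :=
  (v.valuation_of_algebraMap (K := ℚ) (gen v)).trans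
    (intValuation_singleton _ (gen_ne_zero v) (span_gen v).symm)

theorem val_gen_ne (v w : HeightOneSpectrum ℤ) (hvw : v ≠ w) :
    w.valuation ℚ ((gen v : ℤ) : ℚ) = 1 := by
  refine (w.valuation_of_algebraMap (K := ℚ) (gen v)).trans ?_
  refine le_antisymm (intValuation_le_one w _) ?_
  by_contra hlt
  rw [not_le, intValuation_lt_one_iff_dvd, span_gen, Ideal.dvd_iff_le] at hlt
  have hmax : v.asIdeal.IsMaximal := Ideal.IsPrime.isMaximal v.isPrime v.ne_bot
  have : v.asIdeal = w.asIdeal := hmax.eq_of_le (Ideal.IsPrime.ne_top w.isPrime) hlt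
  exact hvw (HeightOneSpectrum.ext this)

/-- Existence of a rational number with prescribed valuations. -/
theorem exists_rat_valuation (g : HeightOneSpectrum ℤ → WithZero (Multiplicative ℤ))
    (hg0 : ∀ v, g v ≠ 0) (hfin : {v | g v ≠ 1}.Finite) :
    ∃ q : ℚ, q ≠ 0 ∧ ∀ v, v.valuation ℚ q = g v := by
  classical
  set S := hfin.toFinset with hS
  set d : HeightOneSpectrum ℤ → ℤ := fun v => Multiplicative.toAdd (WithZero.unzero (hg0 v))
    with hd
  refine ⟨∏ v ∈ S, ((gen v : ℤ) : ℚ) ^ (-(d v)), ?_, ?_⟩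
  · apply Finset.prod_ne_zero_iff.mpr
    intro v _
    exact zpow_ne_zero _ (by exact_mod_cast gen_ne_zero v)
  · intro w
    rw [map_prod]
    have hfactor : ∀ v ∈ S, w.valuation ℚ (((gen v : ℤ) : ℚ) ^ (-(d v)))
        = if v = w then g w else 1 := by
      intro v _
      rw [map_zpow₀]
      by_cases hvw : v = w
      · subst hvw
        rw [val_gen_self, if_pos rfl, ← WithZero.coe_zpow]
        have : (Multiplicative.ofAdd (-1 : ℤ)) ^ (-(d v)) = WithZero.unzero (hg0 v) := by
          rw [← ofAdd_toAdd (WithZero.unzero (hg0 v)), ← ofAdd_zsmul]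
          congr 1
          simp [hd, smul_eq_mul]
        rw [this, WithZero.coe_unzero]
      · rw [val_gen_ne v w hvw, if_neg hvw, one_zpow]
    rw [Finset.prod_congr rfl hfactor]
    by_cases hw : w ∈ S
    · rw [Finset.prod_eq_single_of_mem w hw (fun v _ hvw => if_neg hvw), if_pos rfl]
    · rw [Finset.prod_eq_one (fun v hv => if_neg (fun h : v = w => hw (h ▸ hv)))]
      have : g w = 1 := by
        by_contra hne
        exact hw (hfin.mem_toFinset.mpr hne)
      rw [this]

/-- A rational whose valuation is at most one at every finite place is an integer. -/
theorem int_of_val_le_one (q : ℚ) (h : ∀ v : HeightOneSpectrum ℤ, v.valuation ℚ q ≤ 1) :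
    ∃ m : ℤ, (m : ℚ) = q := by
  rcases eq_or_ne q 0 with rfl | hq
  · exact ⟨0, by norm_num⟩
  refine ⟨q.num, ?_⟩
  suffices hden : q.den = 1 by
    conv_rhs => rw [← Rat.num_div_den q]
    rw [hden]; norm_num
  by_contra hden
  obtain ⟨p, hp, hpd⟩ := Nat.exists_prime_and_dvd hden
  have hpz : Prime (p : ℤ) := Nat.prime_iff_prime_int.mp hp
  set v : HeightOneSpectrum ℤ :=
    ⟨Ideal.span {(p : ℤ)}, (Ideal.span_singleton_prime hpz.ne_zero).mpr hpz,
      by simpa using hpz.ne_zero⟩ with hv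
  have hq' : q = ((q.num : ℤ) : ℚ) / (((q.den : ℤ) : ℤ) : ℚ) := by
    conv_lhs => rw [← Rat.num_div_den q]
    norm_num
  have hvden : v.intValuation ((q.den : ℕ) : ℤ) < 1 := by
    rw [intValuation_lt_one_iff_dvd, Ideal.dvd_span_singleton]
    exact Ideal.mem_span_singleton.mpr (by exact_mod_cast hpd)
  have hvdenne : v.intValuation ((q.den : ℕ) : ℤ) ≠ 0 :=
    intValuation_ne_zero v _ (by exact_mod_cast q.den_nz)
  have hvnum : v.intValuation (q.num : ℤ) = 1 := by
    refine le_antisymm (intValuation_le_one v _) ?_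
    by_contra hlt
    rw [not_le, intValuation_lt_one_iff_dvd, Ideal.dvd_span_singleton] at hlt
    have hdvd : (p : ℤ) ∣ q.num := Ideal.mem_span_singleton.mp hlt
    have h2 : p ∣ q.num.natAbs := Int.natCast_dvd.mp hdvd
    have h3 := Nat.dvd_gcd h2 hpd
    rw [q.reduced] at h3
    exact hp.one_lt.ne' (Nat.eq_one_of_dvd_one h3)
  have hval : 1 < v.valuation ℚ q := by
    have e1 : v.valuation ℚ ((q.num : ℤ) : ℚ) = v.intValuation q.num :=
      v.valuation_of_algebraMap (K := ℚ) q.num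
    have e2 : v.valuation ℚ (((q.den : ℤ) : ℤ) : ℚ) = v.intValuation (q.den : ℤ) :=
      v.valuation_of_algebraMap (K := ℚ) (q.den : ℤ)
    rw [hq', map_div₀, e1, e2, hvnum, one_div]
    exact (one_lt_inv₀ (lt_of_le_of_ne (zero_le') (Ne.symm hvdenne))).mpr hvden
  exact absurd (h v) (not_le.mpr hval)

/-! ### Local units -/

theorem val_unit_eq_one (v : HeightOneSpectrum ℤ) (n : (v.adicCompletionIntegers ℚ)ˣ) :
    Valued.v ((n : v.adicCompletionIntegers ℚ) : v.adicCompletion ℚ) = 1 := by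
  have h1 : Valued.v ((n : v.adicCompletionIntegers ℚ) : v.adicCompletion ℚ) ≤ 1 :=
    (n : v.adicCompletionIntegers ℚ).2
  have h2 : Valued.v (((n⁻¹ : (v.adicCompletionIntegers ℚ)ˣ) :
      v.adicCompletionIntegers ℚ) : v.adicCompletion ℚ) ≤ 1 :=
    ((n⁻¹ : (v.adicCompletionIntegers ℚ)ˣ) : v.adicCompletionIntegers ℚ).2
  have h3 : Valued.v ((n : v.adicCompletionIntegers ℚ) : v.adicCompletion ℚ) *
      Valued.v (((n⁻¹ : (v.adicCompletionIntegers ℚ)ˣ) :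
        v.adicCompletionIntegers ℚ) : v.adicCompletion ℚ) = 1 := by
    rw [← Valuation.map_mul]
    norm_cast
    simp [n.mul_inv]
  refine le_antisymm h1 ?_
  calc (1 : WithZero (Multiplicative ℤ)) = _ * _ := h3.symm
    _ ≤ _ * 1 := mul_le_mul_right h2 _
    _ = _ := mul_one _

theorem exists_unit_of_val_one (v : HeightOneSpectrum ℤ) (y : v.adicCompletion ℚ)
    (h : Valued.v y = 1) :
    ∃ n : (v.adicCompletionIntegers ℚ)ˣ,
      ((n : v.adicCompletionIntegers ℚ) : v.adicCompletion ℚ) = y := by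
  have hy0 : y ≠ 0 := by intro h0; rw [h0, map_zero] at h; exact zero_ne_one h
  have hinv : Valued.v y⁻¹ = 1 := by rw [map_inv₀, h, inv_one]
  refine ⟨⟨⟨y, ?_⟩, ⟨y⁻¹, ?_⟩, ?_, ?_⟩, rfl⟩
  · rw [mem_adicCompletionIntegers ℤ ℚ, h]
  · rw [mem_adicCompletionIntegers ℤ ℚ, hinv]
  · exact Subtype.ext (mul_inv_cancel₀ hy0)
  · exact Subtype.ext (inv_mul_cancel₀ hy0)

/-! ### The monoid homomorphisms -/

/-- Positive reals to real units. -/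
noncomputable def posUnits : {r : ℝ // 0 < r} →* ℝˣ where
  toFun r := Units.mk0 r.1 (ne_of_gt r.2)
  map_one' := by ext; rfl
  map_mul' x y := by ext; rfl

/-- Product of local unit groups to the units of the finite integral adeles. -/
noncomputable def piUnitsHom : (Π v : HeightOneSpectrum ℤ, (v.adicCompletionIntegers ℚ)ˣ) →*
    (FiniteIntegralAdeles ℤ ℚ)ˣ where
  toFun n :=
    ⟨fun v => (n v : v.adicCompletionIntegers ℚ),
     fun v => ((n v)⁻¹ : (v.adicCompletionIntegers ℚ)ˣ),
     funext fun v => (n v).mul_inv,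
     funext fun v => (n v).inv_mul⟩
  map_one' := by ext; rfl
  map_mul' x y := by ext; rfl

noncomputable abbrev QA := FiniteAdeleRing ℤ ℚ

/-- The homomorphism `D →* ℝˣ × Aˣ`. -/
noncomputable def F0 : (ℚˣ × {r : ℝ // 0 < r} ×
    (Π v : HeightOneSpectrum ℤ, (v.adicCompletionIntegers ℚ)ˣ)) →* ℝˣ × (FiniteAdeleRing ℤ ℚ)ˣ :=
  ((Units.map (algebraMap ℚ ℝ).toMonoidHom).comp (MonoidHom.fst _ _) *
      posUnits.comp ((MonoidHom.fst _ _).comp (MonoidHom.snd _ _))).prod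
    ((Units.map (algebraMap ℚ (FiniteAdeleRing ℤ ℚ)).toMonoidHom).comp (MonoidHom.fst _ _) *
      (Units.map (algebraMap (FiniteIntegralAdeles ℤ ℚ) (FiniteAdeleRing ℤ ℚ)).toMonoidHom).comp
        (piUnitsHom.comp ((MonoidHom.snd _ _).comp (MonoidHom.snd _ _))))

theorem F0_apply (q : ℚˣ) (r : {r : ℝ // 0 < r})
    (n : Π v : HeightOneSpectrum ℤ, (v.adicCompletionIntegers ℚ)ˣ) :
    F0 (q, r, n) =
      (Units.map (algebraMap ℚ ℝ).toMonoidHom q * posUnits r,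
       Units.map (algebraMap ℚ (FiniteAdeleRing ℤ ℚ)).toMonoidHom q *
         Units.map (algebraMap (FiniteIntegralAdeles ℤ ℚ) (FiniteAdeleRing ℤ ℚ)).toMonoidHom
           (piUnitsHom n)) := rfl

end IdeleAux

open IdeleAux

set_option maxHeartbeats 1600000 in
/-- The ideles of `ℚ`: the map `(q, r, n) ↦ q·r·n` from
`ℚ^× × ℝ_{>0} × ∏_ℓ ℤ_ℓ^×` to the unit group of the adele ring `ℝ × 𝔸_f` of `ℚ`
(each factor embedded in the canonical way) is an isomorphism of groups. -/
theorem idele_decomposition_of_Q :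
    ∃ e : (ℚˣ × {r : ℝ // 0 < r} ×
        (Π v : HeightOneSpectrum ℤ, (v.adicCompletionIntegers ℚ)ˣ)) ≃*
          (ℝ × FiniteAdeleRing ℤ ℚ)ˣ,
      ∀ (q : ℚˣ) (r : {r : ℝ // 0 < r})
        (n : Π v : HeightOneSpectrum ℤ, (v.adicCompletionIntegers ℚ)ˣ),
        ((e (q, r, n) : ℝ × FiniteAdeleRing ℤ ℚ)) =
          (((q : ℚ) : ℝ), algebraMap ℚ (FiniteAdeleRing ℤ ℚ) (q : ℚ)) *
            ((r : ℝ), 1) *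
            (1, algebraMap (FiniteIntegralAdeles ℤ ℚ) (FiniteAdeleRing ℤ ℚ)
              (fun v => (n v : v.adicCompletionIntegers ℚ))) := by
  classical
  -- value of an element of `ℚ` in the adele components
  have hQval : ∀ (k : ℚ) (v : HeightOneSpectrum ℤ),
      Valued.v ((algebraMap ℚ (FiniteAdeleRing ℤ ℚ) k) v) = v.valuation ℚ k := by
    intro k v
    have h0 : (algebraMap ℚ (FiniteAdeleRing ℤ ℚ) k) v =
        _ := FiniteAdeleRing.algebraMap_apply (k := k) (v := v)
    rw [h0]
    exact valuedAdicCompletion_eq_valuation' v k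
  have hbij : Function.Bijective F0 := by
    constructor
    · -- injectivity
      rw [injective_iff_map_eq_one]
      rintro ⟨q, r, n⟩ h1
      rw [F0_apply, Prod.mk_eq_one] at h1
      obtain ⟨hre, hfin⟩ := h1
      -- valuation of q is 1 everywhere
      have hval1 : ∀ v : HeightOneSpectrum ℤ, v.valuation ℚ (q : ℚ) = 1 := by
        intro v
        have := congrArg (fun u : (FiniteAdeleRing ℤ ℚ)ˣ => Valued.v ((u : FiniteAdeleRing ℤ ℚ) v)) hfin
        simp only [Units.val_mul] at this
        have hv1 : Valued.v (((Units.map (algebraMap ℚ (FiniteAdeleRing ℤ ℚ)).toMonoidHom q *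
            Units.map (algebraMap (FiniteIntegralAdeles ℤ ℚ) (FiniteAdeleRing ℤ ℚ)).toMonoidHom
              (piUnitsHom n) : (FiniteAdeleRing ℤ ℚ)ˣ) : FiniteAdeleRing ℤ ℚ) v) = 1 := by
          rw [hfin]
          show Valued.v ((1 : FiniteAdeleRing ℤ ℚ) v) = 1
          rw [show ((1 : FiniteAdeleRing ℤ ℚ) v) = 1 from rfl, map_one]
        have hsplit : (((Units.map (algebraMap ℚ (FiniteAdeleRing ℤ ℚ)).toMonoidHom q *
            Units.map (algebraMap (FiniteIntegralAdeles ℤ ℚ) (FiniteAdeleRing ℤ ℚ)).toMonoidHom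
              (piUnitsHom n) : (FiniteAdeleRing ℤ ℚ)ˣ) : FiniteAdeleRing ℤ ℚ) v) =
            (algebraMap ℚ (FiniteAdeleRing ℤ ℚ) (q : ℚ)) v *
            ((n v : v.adicCompletionIntegers ℚ) : v.adicCompletion ℚ) := rfl
        rw [hsplit, Valuation.map_mul, hQval, val_unit_eq_one, mul_one] at hv1
        exact hv1
      -- q = ±1
      obtain ⟨m, hm⟩ := int_of_val_le_one (q : ℚ) (fun v => le_of_eq (hval1 v))
      obtain ⟨m', hm'⟩ := int_of_val_le_one ((q⁻¹ : ℚˣ) : ℚ) (by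
        intro v
        have : v.valuation ℚ ((q⁻¹ : ℚˣ) : ℚ) = (v.valuation ℚ (q : ℚ))⁻¹ := by
          rw [← map_inv₀]
          congr 1
          exact (Units.val_inv_eq_inv_val q)
        rw [this, hval1 v, inv_one])
      have hmm' : m * m' = 1 := by
        have : ((m * m' : ℤ) : ℚ) = 1 := by
          push_cast
          rw [hm, hm']
          simp
        exact_mod_cast this
      have hm1 : m = 1 ∨ m = -1 := Int.isUnit_iff.mp (IsUnit.of_mul_eq_one _ hmm')
      -- the real component rules out -1
      have hrepos : ((q : ℚ) : ℝ) * (r : ℝ) = 1 := by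
        have := congrArg (fun u : ℝˣ => (u : ℝ)) hre
        simpa [posUnits, eq_ratCast] using this
      have hq1 : (q : ℚ) = 1 := by
        rcases hm1 with h | h
        · rw [← hm, h]; norm_num
        · exfalso
          rw [← hm, h] at hrepos
          push_cast at hrepos
          nlinarith [r.2]
      have hqu : q = 1 := Units.ext hq1
      -- r = 1
      have hr1 : r = 1 := by
        have : ((q : ℚ) : ℝ) * (r : ℝ) = 1 := hrepos
        rw [hq1] at this
        norm_num at this
        exact Subtype.ext this
      -- n = 1
      have hn1 : n = 1 := by
        funext v
        have := congrArg (fun u : (FiniteAdeleRing ℤ ℚ)ˣ => (u : FiniteAdeleRing ℤ ℚ) v) hfin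
        have hval : (algebraMap ℚ (FiniteAdeleRing ℤ ℚ) (q : ℚ)) v *
            ((n v : v.adicCompletionIntegers ℚ) : v.adicCompletion ℚ) = 1 := this
        rw [hq1, map_one] at hval
        rw [show ((1 : FiniteAdeleRing ℤ ℚ) v) = 1 from rfl, one_mul] at hval
        have hOv : (n v : v.adicCompletionIntegers ℚ) = 1 := Subtype.ext hval
        exact Units.ext hOv
      rw [hqu, hr1, hn1]
      rfl
    · -- surjectivity
      rintro ⟨a, x⟩
      have hxinv : ∀ v, (x : FiniteAdeleRing ℤ ℚ) v *
          ((x⁻¹ : (FiniteAdeleRing ℤ ℚ)ˣ) : FiniteAdeleRing ℤ ℚ) v = 1 := by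
        intro v
        have h1 : ((x * x⁻¹ : (FiniteAdeleRing ℤ ℚ)ˣ) : FiniteAdeleRing ℤ ℚ) v =
            ((1 : (FiniteAdeleRing ℤ ℚ)ˣ) : FiniteAdeleRing ℤ ℚ) v := by rw [mul_inv_cancel]
        exact h1
      have hg0 : ∀ v, Valued.v ((x : FiniteAdeleRing ℤ ℚ) v) ≠ 0 := by
        intro v h0
        have h1 := congrArg Valued.v (hxinv v)
        rw [Valuation.map_mul, h0, zero_mul, map_one] at h1
        exact zero_ne_one h1
      have hfing : {v : HeightOneSpectrum ℤ |
          Valued.v ((x : FiniteAdeleRing ℤ ℚ) v) ≠ 1}.Finite := by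
        have h1 : {v : HeightOneSpectrum ℤ |
            (x : FiniteAdeleRing ℤ ℚ) v ∉ v.adicCompletionIntegers ℚ}.Finite :=
          (x : FiniteAdeleRing ℤ ℚ).2
        have h2 : {v : HeightOneSpectrum ℤ |
            ((x⁻¹ : (FiniteAdeleRing ℤ ℚ)ˣ) : FiniteAdeleRing ℤ ℚ) v ∉
              v.adicCompletionIntegers ℚ}.Finite :=
          ((x⁻¹ : (FiniteAdeleRing ℤ ℚ)ˣ) : FiniteAdeleRing ℤ ℚ).2
        refine Set.Finite.subset (h1.union h2) ?_
        intro v hv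
        by_contra hmem
        simp only [Set.mem_union, Set.mem_setOf_eq, not_or, not_not] at hmem
        obtain ⟨ha1, ha2⟩ := hmem
        rw [mem_adicCompletionIntegers ℤ ℚ] at ha1 ha2
        apply hv
        have hprod := congrArg Valued.v (hxinv v)
        rw [Valuation.map_mul, map_one] at hprod
        refine le_antisymm ha1 ?_
        calc (1 : WithZero (Multiplicative ℤ)) = _ * _ := hprod.symm
          _ ≤ _ * 1 := mul_le_mul_right ha2 _
          _ = _ := mul_one _
      -- find the rational q
      obtain ⟨q0, hq00, hq0v⟩ := exists_rat_valuation
        (fun v => Valued.v ((x : FiniteAdeleRing ℤ ℚ) v)) hg0 hfing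
      have hq0v' : ∀ v : HeightOneSpectrum ℤ,
          v.valuation ℚ q0 = Valued.v ((x : FiniteAdeleRing ℤ ℚ) v) := hq0v
      set q : ℚ := if 0 < (a : ℝ) * (q0 : ℝ) then q0 else -q0 with hqdef
      have hq0 : q ≠ 0 := by
        rw [hqdef]
        split <;> simpa using hq00
      have hqv : ∀ v : HeightOneSpectrum ℤ,
          v.valuation ℚ q = Valued.v ((x : FiniteAdeleRing ℤ ℚ) v) := by
        intro v
        rw [hqdef]
        split
        · exact hq0v' v
        · push_cast
          rw [Valuation.map_neg]
          exact hq0v' v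
      have haq : 0 < (a : ℝ) * (q : ℝ) := by
        have ha0 : (a : ℝ) ≠ 0 := a.ne_zero
        have hq0R : (q0 : ℝ) ≠ 0 := by exact_mod_cast hq00
        rw [hqdef]
        rcases lt_trichotomy ((a : ℝ) * (q0 : ℝ)) 0 with h | h | h
        · rw [if_neg (by linarith)]
          push_cast
          nlinarith
        · exact absurd h (mul_ne_zero ha0 hq0R)
        · rw [if_pos h]; exact_mod_cast h
      have hrpos : 0 < (a : ℝ) / (q : ℝ) := by
        have hq0R : (q : ℝ) ≠ 0 := by exact_mod_cast hq0
        rcases lt_trichotomy ((q : ℝ)) 0 with h | h | h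
        · have : (a : ℝ) < 0 := by nlinarith
          exact div_pos_of_neg_of_neg this h
        · exact absurd h hq0R
        · have : 0 < (a : ℝ) := by nlinarith
          exact div_pos this h
      set r : {r : ℝ // 0 < r} := ⟨(a : ℝ) / (q : ℝ), hrpos⟩ with hr
      -- local units
      have hyval : ∀ v, Valued.v ((x : FiniteAdeleRing ℤ ℚ) v *
          ((algebraMap ℚ (FiniteAdeleRing ℤ ℚ) q) v)⁻¹) = 1 := by
        intro v
        rw [Valuation.map_mul, map_inv₀, hQval, hqv v]
        exact mul_inv_cancel₀ (hg0 v)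
      choose n hn using fun v => exists_unit_of_val_one v _ (hyval v)
      refine ⟨(Units.mk0 q hq0, r, n), ?_⟩
      rw [F0_apply]
      ext : 1
      · -- real component
        ext
        show algebraMap ℚ ℝ q * ((a : ℝ) / (q : ℝ)) = (a : ℝ)
        rw [eq_ratCast]
        field_simp
      · -- finite component
        ext : 1
        apply FiniteAdeleRing.ext
        intro v
        show (algebraMap ℚ (FiniteAdeleRing ℤ ℚ) q) v *
            ((n v : v.adicCompletionIntegers ℚ) : v.adicCompletion ℚ) =
            (x : FiniteAdeleRing ℤ ℚ) v
        rw [hn v]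
        have hqvne : (algebraMap ℚ (FiniteAdeleRing ℤ ℚ) q) v ≠ 0 := by
          intro h0
          have h1 := hQval q v
          rw [h0, map_zero] at h1
          exact hg0 v ((hqv v).symm.trans h1.symm)
        rw [show (algebraMap ℚ (FiniteAdeleRing ℤ ℚ) q) v *
            ((x : FiniteAdeleRing ℤ ℚ) v * ((algebraMap ℚ (FiniteAdeleRing ℤ ℚ) q) v)⁻¹) =
            (x : FiniteAdeleRing ℤ ℚ) v * ((algebraMap ℚ (FiniteAdeleRing ℤ ℚ) q) v *
              ((algebraMap ℚ (FiniteAdeleRing ℤ ℚ) q) v)⁻¹) from by ring,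
          mul_inv_cancel₀ hqvne, mul_one]
  refine ⟨(MulEquiv.ofBijective F0 hbij).trans MulEquiv.prodUnits.symm, ?_⟩
  intro q r n
  show ((MulEquiv.prodUnits.symm (F0 (q, r, n)) : (ℝ × FiniteAdeleRing ℤ ℚ)ˣ) :
      ℝ × FiniteAdeleRing ℤ ℚ) = _
  rw [F0_apply]
  have : ((MulEquiv.prodUnits.symm
      ((Units.map (algebraMap ℚ ℝ).toMonoidHom q * posUnits r,
       Units.map (algebraMap ℚ (FiniteAdeleRing ℤ ℚ)).toMonoidHom q *
         Units.map (algebraMap (FiniteIntegralAdeles ℤ ℚ) (FiniteAdeleRing ℤ ℚ)).toMonoidHom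
           (piUnitsHom n))) : (ℝ × FiniteAdeleRing ℤ ℚ)ˣ) : ℝ × FiniteAdeleRing ℤ ℚ) =
      ((algebraMap ℚ ℝ (q : ℚ) * (r : ℝ)),
       (algebraMap ℚ (FiniteAdeleRing ℤ ℚ) (q : ℚ) *
        algebraMap (FiniteIntegralAdeles ℤ ℚ) (FiniteAdeleRing ℤ ℚ)
          (fun v => (n v : v.adicCompletionIntegers ℚ)))) := rfl
  rw [this]
  rw [eq_ratCast]
  ext : 1 <;> simp [Prod.mul_def]
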